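/- arXiv:1204.0644 — 4 statements merged into one kernel-verified Lean document; each statement's English description precedes it below -/
import Mathlib

section
/- Let G = (V, E) be a graph and let v ∈ V. If every minimum-weight Roman dominating function f on G satisfies f(v) = 0, then γ_R(G − v) = γ_R(G). -/
open Finset
open scoped Classical

/-- `S` is a dominating set of `G`: every vertex outside `S` has a neighbor in `S`. -/
def IsDomSet {α : Type*} (G : SimpleGraph α) (S : Set α) : Prop :=
  ∀ v ∉ S, ∃ u ∈ S, G.Adj u v

/-- The domination number `γ(G)`. -/
noncomputable def domNum {α : Type*} (G : SimpleGraph α) [Fintype α] : ℕ :=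
  sInf {k | ∃ S : Finset α, IsDomSet G ↑S ∧ S.card = k}

/-- The rooted product `G ∘ H` with root `v` of `H`: one copy of `H` for each vertex of `G`,
identifying the root of the `a`-th copy with the vertex `a` of `G`. -/
def rootedProd {α β : Type*} (G : SimpleGraph α) (H : SimpleGraph β) (v : β) :
    SimpleGraph (α × β) where
  Adj x y := (x.2 = v ∧ y.2 = v ∧ G.Adj x.1 y.1) ∨ (x.1 = y.1 ∧ H.Adj x.2 y.2)
  symm := by
    constructor
    rintro x y (⟨h1, h2, h3⟩ | ⟨h1, h2⟩)
    · exact Or.inl ⟨h2, h1, h3.symm⟩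
    · exact Or.inr ⟨h1.symm, h2.symm⟩
  loopless := by
    constructor
    rintro x (⟨_, _, h⟩ | ⟨_, h⟩)
    · exact G.loopless.irrefl _ h
    · exact H.loopless.irrefl _ h

/-- The graph `G - v` obtained by deleting the vertex `v`. -/
def deleteVert {α : Type*} (G : SimpleGraph α) (v : α) : SimpleGraph {u : α // u ≠ v} :=
  SimpleGraph.comap Subtype.val G

/-- The graph `G - A` obtained by deleting a set `A` of vertices. -/
def deleteSet {α : Type*} (G : SimpleGraph α) (A : Set α) : SimpleGraph {u : α // u ∉ A} :=
  SimpleGraph.comap Subtype.val G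

/-- `f` is a Roman dominating function on `G`. -/
def IsRDF {α : Type*} (G : SimpleGraph α) (f : α → ℕ) : Prop :=
  (∀ u, f u ≤ 2) ∧ ∀ u, f u = 0 → ∃ w, G.Adj u w ∧ f w = 2

/-- The Roman domination number `γ_R(G)`. -/
noncomputable def romanDomNum {α : Type*} (G : SimpleGraph α) [Fintype α] : ℕ :=
  sInf {k | ∃ f : α → ℕ, IsRDF G f ∧ ∑ u, f u = k}

/-- `S` is an independent set of `G`. -/
def IsIndep {α : Type*} (G : SimpleGraph α) (S : Set α) : Prop :=
  ∀ u ∈ S, ∀ w ∈ S, ¬ G.Adj u w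

/-- The independence number `α(G)`. -/
noncomputable def indepNum {α : Type*} (G : SimpleGraph α) [Fintype α] : ℕ :=
  sSup {k | ∃ S : Finset α, IsIndep G ↑S ∧ S.card = k}

/-- The independent domination number `i(G)`. -/
noncomputable def indepDomNum {α : Type*} (G : SimpleGraph α) [Fintype α] : ℕ :=
  sInf {k | ∃ S : Finset α, IsDomSet G ↑S ∧ IsIndep G ↑S ∧ S.card = k}

/-- `S` is a connected dominating set of `G`. -/
def IsConnDomSet {α : Type*} (G : SimpleGraph α) (S : Set α) : Prop :=
  IsDomSet G S ∧ (G.induce S).Connected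

/-- The connected domination number `γ_c(G)`. -/
noncomputable def connDomNum {α : Type*} (G : SimpleGraph α) [Fintype α] : ℕ :=
  sInf {k | ∃ S : Finset α, IsConnDomSet G ↑S ∧ S.card = k}

/-- `D` is a super dominating set of `G`: every `w ∉ D` has a neighbor `u ∈ D` with
`N(u) ⊆ D ∪ {w}`. -/
def IsSuperDomSet {α : Type*} (G : SimpleGraph α) (D : Set α) : Prop :=
  ∀ w ∉ D, ∃ u ∈ D, G.Adj u w ∧ ∀ x, G.Adj u x → x ∈ D ∪ {w}

/-- The super domination number `γ_sp(G)`. -/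
noncomputable def superDomNum {α : Type*} (G : SimpleGraph α) [Fintype α] : ℕ :=
  sInf {k | ∃ S : Finset α, IsSuperDomSet G ↑S ∧ S.card = k}

/-- The number of end vertices (vertices of degree one) of `G`, denoted `n₁(G)`. -/
noncomputable def endVertCount {α : Type*} (G : SimpleGraph α) [Fintype α] : ℕ :=
  Nat.card {u : α // G.degree u = 1}

lemma rdfNonempty {α : Type*} [Fintype α] (G : SimpleGraph α) :
    {k | ∃ f : α → ℕ, IsRDF G f ∧ ∑ u, f u = k}.Nonempty :=
  ⟨_, fun _ => 1, ⟨fun _ => one_le_two, fun _ h => absurd h one_ne_zero⟩, rfl⟩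

lemma romanDomNum_le {α : Type*} [Fintype α] (G : SimpleGraph α) (f : α → ℕ)
    (hf : IsRDF G f) : romanDomNum G ≤ ∑ u, f u :=
  Nat.sInf_le ⟨f, hf, rfl⟩

lemma romanDomNum_exists {α : Type*} [Fintype α] (G : SimpleGraph α) :
    ∃ f : α → ℕ, IsRDF G f ∧ ∑ u, f u = romanDomNum G :=
  Nat.sInf_mem (rdfNonempty G)

/-- if every minimum Roman dominating function of `G` assigns `0` to `v`, then
`γ_R(G − v) = γ_R(G)`. -/
theorem stmt3 {α : Type*} [Fintype α] (G : SimpleGraph α) (v : α)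
    (hv : ∀ f : α → ℕ, IsRDF G f → ∑ u, f u = romanDomNum G → f v = 0) :
    romanDomNum (deleteVert G v) = romanDomNum G := by
  obtain ⟨f, hf, hsum⟩ := romanDomNum_exists G
  have hfv : f v = 0 := hv f hf hsum
  have hsub : ∑ u : {u : α // u ≠ v}, f u.val = ∑ u, f u := by
    rw [← Finset.sum_subtype (p := fun u => u ≠ v) (Finset.univ.erase v)
      (fun x => by simp) f]
    exact Finset.sum_erase Finset.univ hfv
  have hrdf1 : IsRDF (deleteVert G v) (fun u => f u.val) := by
    refine ⟨fun u => hf.1 u.val, fun u hu => ?_⟩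
    obtain ⟨w, hadj, hw2⟩ := hf.2 u.val hu
    have hwv : w ≠ v := fun h => by rw [h, hfv] at hw2; exact two_ne_zero hw2.symm
    exact ⟨⟨w, hwv⟩, hadj, hw2⟩
  have hle : romanDomNum (deleteVert G v) ≤ romanDomNum G := by
    calc romanDomNum (deleteVert G v) ≤ ∑ u : {u : α // u ≠ v}, f u.val :=
          romanDomNum_le _ _ hrdf1
      _ = romanDomNum G := by rw [hsub, hsum]
  refine le_antisymm hle ?_
  by_contra hlt
  push_neg at hlt
  obtain ⟨g, hg, hgsum⟩ := romanDomNum_exists (deleteVert G v)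
  let f' : α → ℕ := fun u => if h : u = v then 1 else g ⟨u, h⟩
  have hf'v : f' v = 1 := dif_pos rfl
  have hne : ∀ (u : α) (h : u ≠ v), f' u = g ⟨u, h⟩ := fun u h => dif_neg h
  have hf'rdf : IsRDF G f' := by
    constructor
    · intro u
      by_cases h : u = v
      · rw [h, hf'v]; exact one_le_two
      · rw [hne u h]; exact hg.1 _
    · intro u hu
      have h : u ≠ v := fun h => by rw [h, hf'v] at hu; exact one_ne_zero hu
      obtain ⟨w, hadj, hw2⟩ := hg.2 ⟨u, h⟩ (by rw [← hne u h]; exact hu)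
      exact ⟨w.val, hadj, by rw [hne w.val w.prop]; exact hw2⟩
  have hf'sum : ∑ u, f' u = romanDomNum (deleteVert G v) + 1 := by
    rw [← Finset.add_sum_erase Finset.univ f' (Finset.mem_univ v), hf'v, add_comm]
    congr 1
    rw [← hgsum,
      Finset.sum_subtype (p := fun u => u ≠ v) (Finset.univ.erase v)
        (fun x => by simp) (fun u => f' u)]
    exact Finset.sum_congr rfl fun u _ => hne u.val u.prop
  have h1 : romanDomNum G ≤ romanDomNum (deleteVert G v) + 1 := by
    rw [← hf'sum]; exact romanDomNum_le _ _ hf'rdf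
  have h2 : ∑ u, f' u = romanDomNum G := by omega
  have := hv f' hf'rdf h2
  rw [hf'v] at this
  exact one_ne_zero this
end

section
/- Let G be a graph of order n ≥ 2 and let H be a graph with root vertex v and at least two vertices. If every minimum-weight Roman dominating function f on H satisfies f(v) = 1, then γ_R(G∘H) = n·(γ_R(H) − 1) + γ_R(G). -/
open Finset
open scoped Classical

lemma romanDomNum_le_sum {α : Type*} (G : SimpleGraph α) [Fintype α] {f : α → ℕ}
    (h : IsRDF G f) : romanDomNum G ≤ ∑ u, f u := Nat.sInf_le ⟨f, h, rfl⟩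

lemma rdf_set_nonempty {α : Type*} (G : SimpleGraph α) [Fintype α] :
    {k | ∃ f : α → ℕ, IsRDF G f ∧ ∑ u, f u = k}.Nonempty :=
  ⟨_, fun _ => 1, ⟨fun _ => one_le_two, fun _ h => absurd h one_ne_zero⟩, rfl⟩

/-- if every minimum Roman dominating function of `H` assigns `1` to the root `v`,
then `γ_R(G∘H) = n·(γ_R(H) − 1) + γ_R(G)`. -/
theorem stmt7 {α β : Type*} [Fintype α] [Fintype β]
    (G : SimpleGraph α) (H : SimpleGraph β) (v : β)
    (hn : 2 ≤ Fintype.card α) (hm : 2 ≤ Fintype.card β)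
    (hv : ∀ f : β → ℕ, IsRDF H f → ∑ u, f u = romanDomNum H → f v = 1) :
    romanDomNum (rootedProd G H v) =
      Fintype.card α * (romanDomNum H - 1) + romanDomNum G := by
  classical
  obtain ⟨f, hf, hfw⟩ := Nat.sInf_mem (rdf_set_nonempty H)
  obtain ⟨g, hg, hgw⟩ := Nat.sInf_mem (rdf_set_nonempty G)
  have hfv : f v = 1 := hv f hf hfw
  have hfw' : romanDomNum H = ∑ u, f u := hfw.symm
  have hgw' : romanDomNum G = ∑ u, g u := hgw.symm
  clear hfw hgw
  have hH1 : 1 ≤ romanDomNum H := by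
    rw [hfw']
    calc 1 = f v := hfv.symm
      _ ≤ ∑ u, f u := Finset.single_le_sum (fun _ _ => Nat.zero_le _) (mem_univ v)
  obtain ⟨γH, hγH⟩ : ∃ x, romanDomNum H = x := ⟨_, rfl⟩
  obtain ⟨γG, hγG'⟩ : ∃ x, romanDomNum G = x := ⟨_, rfl⟩
  rw [hγH] at hfw' hH1
  rw [hγG'] at hgw'
  simp only [hγH] at hv
  rw [hγH, hγG']
  set n := Fintype.card α with hn'
  apply le_antisymm
  · -- upper bound
    have herase : ∑ b ∈ univ.erase v, f b = γH - 1 := by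
      have := Finset.add_sum_erase univ f (mem_univ v)
      omega
    have key : ∑ x : α × β, (if x.2 = v then g x.1 else f x.2)
        = n * (γH - 1) + γG := by
      rw [Fintype.sum_prod_type]
      have h1 : ∀ a : α, ∑ b, (if b = v then g a else f b)
          = g a + (γH - 1) := by
        intro a
        rw [← Finset.add_sum_erase univ (fun b => if b = v then g a else f b) (mem_univ v)]
        simp only [if_pos rfl]
        congr 1
        rw [Finset.sum_congr rfl (fun b hb => if_neg (Finset.ne_of_mem_erase hb))]
        exact herase
      calc ∑ a, ∑ b, (if b = v then g a else f b)
          = ∑ a : α, (g a + (γH - 1)) :=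
            Finset.sum_congr rfl (fun a _ => h1 a)
        _ = (∑ a, g a) + n * (γH - 1) := by
            rw [Finset.sum_add_distrib, Finset.sum_const, card_univ, smul_eq_mul]
        _ = n * (γH - 1) + γG := by rw [hgw']; ring
    apply Nat.sInf_le
    refine ⟨fun x => if x.2 = v then g x.1 else f x.2, ⟨?_, ?_⟩, key⟩
    · intro u; dsimp only; split
      · exact hg.1 u.1
      · exact hf.1 u.2
    · rintro ⟨a, b⟩ h0
      dsimp only at h0 ⊢
      by_cases hb : b = v
      · rw [if_pos hb] at h0
        obtain ⟨u, hadj, hu2⟩ := hg.2 a h0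
        refine ⟨(u, v), Or.inl ⟨hb, rfl, hadj⟩, ?_⟩
        simpa using hu2
      · rw [if_neg hb] at h0
        obtain ⟨w, hadj, hw2⟩ := hf.2 b h0
        have hwv : w ≠ v := by intro h; rw [h, hfv] at hw2; omega
        refine ⟨(a, w), Or.inr ⟨rfl, hadj⟩, ?_⟩
        simpa [hwv] using hw2
  · -- lower bound
    apply le_csInf (rdf_set_nonempty (rootedProd G H v))
    rintro k ⟨F, hF, rfl⟩
    set c := γH - 1 with hc
    set w : α → ℕ := fun a => ∑ b, F (a, b) with hwdef
    have hnonroot : ∀ a b, b ≠ v → F (a, b) = 0 →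
        ∃ b', H.Adj b b' ∧ F (a, b') = 2 := by
      intro a b hbv h0
      obtain ⟨⟨u, b'⟩, hadj, h2⟩ := hF.2 (a, b) h0
      have hadj' : (b = v ∧ b' = v ∧ G.Adj a u) ∨ (a = u ∧ H.Adj b b') := hadj
      rcases hadj' with ⟨h1, _, _⟩ | ⟨h1, h2'⟩
      · exact absurd h1 hbv
      · exact ⟨b', h2', by rwa [← h1] at h2⟩
    have hRDFa : ∀ a, (F (a, v) ≠ 0 ∨ ∃ b', H.Adj v b' ∧ F (a, b') = 2) →
        IsRDF H (fun b => F (a, b)) := by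
      intro a ha
      refine ⟨fun b => hF.1 (a, b), ?_⟩
      intro b h0
      by_cases hbv : b = v
      · subst hbv
        rcases ha with h | h
        · exact absurd h0 h
        · exact h
      · exact hnonroot a b hbv h0
    have hlb : ∀ a, c ≤ w a := by
      intro a
      by_cases hcase : F (a, v) ≠ 0 ∨ ∃ b', H.Adj v b' ∧ F (a, b') = 2
      · have h := romanDomNum_le_sum H (hRDFa a hcase)
        rw [hγH] at h
        have e5 : w a = ∑ b, F (a, b) := rfl
        omega
      · push_neg at hcase
        obtain ⟨h0, hno⟩ := hcase
        set f' : β → ℕ := fun b => if b = v then 1 else F (a, b) with hf'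
        have hrdf' : IsRDF H f' := by
          constructor
          · intro b; simp only [hf']; split
            · omega
            · exact hF.1 (a, b)
          · intro b hb0
            simp only [hf'] at hb0
            by_cases hbv : b = v
            · rw [if_pos hbv] at hb0; omega
            · rw [if_neg hbv] at hb0
              obtain ⟨b', hadj, h2⟩ := hnonroot a b hbv hb0
              refine ⟨b', hadj, ?_⟩
              simp only [hf']
              rw [if_neg ?_]
              · exact h2
              · rintro rfl; rw [h2] at h0; omega
        have hw' : ∑ b, f' b = w a + 1 := by
          have e1 := Finset.add_sum_erase univ f' (mem_univ v)
          have e2 : F (a, v) + ∑ b ∈ univ.erase v, F (a, b) = ∑ b, F (a, b) :=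
            Finset.add_sum_erase univ (fun b => F (a, b)) (mem_univ v)
          have e3 : ∑ b ∈ univ.erase v, f' b = ∑ b ∈ univ.erase v, F (a, b) :=
            Finset.sum_congr rfl (fun b hb => if_neg (Finset.ne_of_mem_erase hb))
          have e4 : f' v = 1 := if_pos rfl
          have e5 : w a = ∑ b, F (a, b) := rfl
          omega
        have h := romanDomNum_le_sum H hrdf'
        rw [hγH] at h
        omega
    set g' : α → ℕ := fun a => min 2 (w a - c) with hg'
    have hgRDF : IsRDF G g' := by
      constructor
      · intro a; exact min_le_left _ _
      · intro a ha0
        have hwa : w a = c := by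
          have := hlb a
          simp only [hg'] at ha0
          omega
        have hbad : F (a, v) = 0 ∧ ∀ b', H.Adj v b' → F (a, b') ≠ 2 := by
          by_contra hcon
          have hca : F (a, v) ≠ 0 ∨ ∃ b', H.Adj v b' ∧ F (a, b') = 2 := by
            push_neg at hcon
            by_cases h : F (a, v) = 0
            · obtain ⟨b', hb1, hb2⟩ := hcon h
              exact Or.inr ⟨b', hb1, hb2⟩
            · exact Or.inl h
          have h := romanDomNum_le_sum H (hRDFa a hca)
          rw [hγH] at h
          have e5 : w a = ∑ b, F (a, b) := rfl
          omega
        obtain ⟨h0v, hno⟩ := hbad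
        obtain ⟨⟨u, b'⟩, hadj, h2⟩ := hF.2 (a, v) h0v
        have hadj' : (v = v ∧ b' = v ∧ G.Adj a u) ∨ (a = u ∧ H.Adj v b') := hadj
        rcases hadj' with ⟨_, hb'v, hGadj⟩ | ⟨rfl, hH⟩
        · rw [hb'v] at h2
          refine ⟨u, hGadj, ?_⟩
          have hrdfu : IsRDF H (fun b => F (u, b)) := hRDFa u (Or.inl (by omega))
          have hγu : γH ≤ w u := hγH ▸ romanDomNum_le_sum H hrdfu
          have hne : w u ≠ γH := by
            intro heq
            have h1' : F (u, v) = 1 := hv (fun b => F (u, b)) hrdfu heq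
            omega
          simp only [hg']
          omega
        · exact absurd h2 (hno b' hH)
    have hsum : ∑ a, w a = ∑ x : α × β, F x := (Fintype.sum_prod_type F).symm
    have hkey : ∑ a, w a = (∑ a, (w a - c)) + n * c := by
      rw [Finset.sum_congr rfl (fun a _ => (Nat.sub_add_cancel (hlb a)).symm),
        Finset.sum_add_distrib, Finset.sum_const, card_univ, smul_eq_mul]
    have hγG : γG ≤ ∑ a, g' a := hγG' ▸ romanDomNum_le_sum G hgRDF
    have hmin : ∑ a, g' a ≤ ∑ a, (w a - c) :=
      Finset.sum_le_sum (fun a _ => min_le_right _ _)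
    calc n * c + γG = γG + n * c := add_comm _ _
      _ ≤ (∑ a, (w a - c)) + n * c := Nat.add_le_add_right (hγG.trans hmin) _
      _ = ∑ a, w a := hkey.symm
      _ = ∑ x : α × β, F x := hsum
end

section
/- Let G be a graph of order n ≥ 2 and let H be a graph with root vertex v and at least two vertices. If v does not belong to any minimum independent dominating set of H, then i(G∘H) = n·i(H). -/
open Finset
open scoped Classical

lemma exists_maxIndep {α : Type*} [Fintype α] (G : SimpleGraph α) :
    ∃ S : Finset α, IsDomSet G ↑S ∧ IsIndep G ↑S := by
  classical
  obtain ⟨S, hS, hmax⟩ := Finset.exists_max_image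
    (Finset.univ.powerset.filter (fun S : Finset α => IsIndep G ↑S)) Finset.card
    ⟨∅, by simp [IsIndep]⟩
  simp only [Finset.mem_filter] at hS
  refine ⟨S, ?_, hS.2⟩
  intro w hw
  by_contra hcon
  push_neg at hcon
  have hind : IsIndep G ↑(insert w S) := by
    intro u hu x hx hadj
    simp only [Finset.coe_insert, Set.mem_insert_iff] at hu hx
    rcases hu with rfl | hu
    · rcases hx with rfl | hx
      · exact G.loopless.irrefl _ hadj
      · exact hcon x hx hadj.symm
    · rcases hx with rfl | hx
      · exact hcon u hu hadj
      · exact hS.2 u hu x hx hadj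
  have hwS : w ∉ S := by simpa using hw
  have := hmax (insert w S) (by
    simp only [Finset.mem_filter, Finset.mem_powerset]
    exact ⟨Finset.subset_univ _, hind⟩)
  rw [Finset.card_insert_of_notMem hwS] at this
  omega

lemma idom_spec {α : Type*} [Fintype α] (G : SimpleGraph α) :
    ∃ S : Finset α, IsDomSet G ↑S ∧ IsIndep G ↑S ∧ S.card = indepDomNum G := by
  obtain ⟨S, h1, h2⟩ := exists_maxIndep G
  have hne : {k | ∃ S : Finset α, IsDomSet G ↑S ∧ IsIndep G ↑S ∧ S.card = k}.Nonempty :=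
    ⟨S.card, S, h1, h2, rfl⟩
  obtain ⟨T, hT1, hT2, hT3⟩ := Nat.sInf_mem hne
  exact ⟨T, hT1, hT2, hT3⟩

/-- if the root `v` belongs to no minimum independent dominating set of `H`,
then `i(G∘H) = n·i(H)`. -/
theorem stmt14 {α β : Type*} [Fintype α] [Fintype β]
    (G : SimpleGraph α) (H : SimpleGraph β) (v : β)
    (hn : 2 ≤ Fintype.card α) (hm : 2 ≤ Fintype.card β)
    (hv : ∀ S : Finset β, IsDomSet H ↑S → IsIndep H ↑S → S.card = indepDomNum H → v ∉ S) :
    indepDomNum (rootedProd G H v) = Fintype.card α * indepDomNum H := by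
  classical
  obtain ⟨S, hSd, hSi, hScard⟩ := idom_spec H
  have hvS : v ∉ S := hv S hSd hSi hScard
  have hub : indepDomNum (rootedProd G H v) ≤ Fintype.card α * indepDomNum H := by
    apply Nat.sInf_le
    refine ⟨Finset.univ ×ˢ S, ?_, ?_, by simp [hScard]⟩
    · intro x hx
      have hx2 : x.2 ∉ S := by simpa using hx
      obtain ⟨u, hu, hadj⟩ := hSd x.2 hx2
      exact ⟨(x.1, u), by simp [hu], Or.inr ⟨rfl, hadj⟩⟩
    · intro x hx y hy hadj
      have hx2 : x.2 ∈ S := by simpa using hx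
      have hy2 : y.2 ∈ S := by simpa using hy
      rcases hadj with ⟨h1, _, _⟩ | ⟨_, h2⟩
      · exact hvS (h1 ▸ hx2)
      · exact hSi x.2 hx2 y.2 hy2 h2
  have hlb : Fintype.card α * indepDomNum H ≤ indepDomNum (rootedProd G H v) := by
    obtain ⟨D, hDd, hDi, hDcard⟩ := idom_spec (rootedProd G H v)
    rw [← hDcard]
    have key : ∀ a : α,
        indepDomNum H ≤ ((D.filter (fun x => x.1 = a)).image Prod.snd).card := by
      intro a
      set T : Finset β := (D.filter (fun x => x.1 = a)).image Prod.snd with hT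
      have hmem : ∀ w, w ∈ T ↔ (a, w) ∈ D := by
        intro w
        constructor
        · intro hw
          simp only [hT, Finset.mem_image, Finset.mem_filter] at hw
          obtain ⟨x, ⟨hxD, hx1⟩, hx2⟩ := hw
          have : x = (a, w) := Prod.ext hx1 hx2
          rwa [this] at hxD
        · intro h
          simp only [hT, Finset.mem_image, Finset.mem_filter]
          exact ⟨(a, w), ⟨h, rfl⟩, rfl⟩
      have hTi : IsIndep H ↑T := by
        intro u hu w hw hadj
        exact hDi (a, u) (by simpa using (hmem u).mp (by simpa using hu))
          (a, w) (by simpa using (hmem w).mp (by simpa using hw))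
          (Or.inr ⟨rfl, hadj⟩)
      by_cases hd : IsDomSet H ↑T
      · exact Nat.sInf_le ⟨T, hd, hTi, rfl⟩
      · unfold IsDomSet at hd
        push_neg at hd
        obtain ⟨w, hwT, hwnd⟩ := hd
        have hwT' : w ∉ T := by simpa using hwT
        have hwD : (a, w) ∉ D := fun h => hwT' ((hmem w).mpr h)
        have hwv : w = v := by
          obtain ⟨x, hxD, hadj⟩ := hDd (a, w) (by simpa using hwD)
          rcases hadj with ⟨_, h2, _⟩ | ⟨h1, h2⟩
          · exact h2
          · refine absurd h2 (hwnd x.2 ?_)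
            have hx2T : x.2 ∈ T := by
              refine (hmem x.2).mpr ?_
              have h1' : x.1 = a := h1
              rw [← h1']
              simpa using hxD
            simpa using hx2T
        subst hwv
        have hT'i : IsIndep H ↑(insert w T) := by
          intro u hu x hx hadj
          simp only [Finset.coe_insert, Set.mem_insert_iff] at hu hx
          rcases hu with rfl | hu
          · rcases hx with hx | hx
            · rw [hx] at hadj; exact H.loopless.irrefl _ hadj
            · exact hwnd x (by simpa using hx) hadj.symm
          · rcases hx with hx | hx
            · rw [hx] at hadj; exact hwnd u (by simpa using hu) hadj
            · exact hTi u (by simpa using hu) x (by simpa using hx) hadj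
        have hT'd : IsDomSet H ↑(insert w T) := by
          intro x hx
          simp only [Finset.coe_insert, Set.mem_insert_iff, not_or] at hx
          obtain ⟨hxv, hxT⟩ := hx
          have hxD : (a, x) ∉ D := fun h => (by simpa using hxT : x ∉ T) ((hmem x).mpr h)
          obtain ⟨y, hyD, hadj⟩ := hDd (a, x) (by simpa using hxD)
          rcases hadj with ⟨_, h2, _⟩ | ⟨h1, h2⟩
          · exact absurd h2 hxv
          · refine ⟨y.2, ?_, h2⟩
            have hy2T : y.2 ∈ T := by
              refine (hmem y.2).mpr ?_
              have h1' : y.1 = a := h1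
              rw [← h1']
              simpa using hyD
            simp only [Finset.coe_insert, Set.mem_insert_iff]
            exact Or.inr (by simpa using hy2T)
        have h1 : indepDomNum H ≤ T.card + 1 := by
          have hmem' : (insert w T).card ∈
              {k | ∃ S : Finset β, IsDomSet H ↑S ∧ IsIndep H ↑S ∧ S.card = k} :=
            ⟨insert w T, hT'd, hT'i, rfl⟩
          have := Nat.sInf_le hmem'
          rwa [Finset.card_insert_of_notMem hwT'] at this
        have h2 : indepDomNum H ≠ T.card + 1 := by
          intro he
          have hcard : (insert w T).card = indepDomNum H := by
            rw [Finset.card_insert_of_notMem hwT', he]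
          exact hv (insert w T) hT'd hT'i hcard (Finset.mem_insert_self w T)
        omega
    have hsum : D.card = ∑ a : α, (D.filter (fun x => x.1 = a)).card :=
      Finset.card_eq_sum_card_fiberwise (fun x _ => Finset.mem_univ x.1)
    rw [hsum]
    calc Fintype.card α * indepDomNum H = ∑ _a : α, indepDomNum H := by
          simp [Finset.sum_const, Finset.card_univ, mul_comm]
      _ ≤ ∑ a : α, (D.filter (fun x => x.1 = a)).card :=
          Finset.sum_le_sum (fun a _ =>
            le_trans (key a) Finset.card_image_le)
  exact le_antisymm hub hlb
end

section
/- Let G be a graph of order n ≥ 2 and let H be any graph with root vertex v and at least two vertices (with G connected and H connected so that connected dominating sets exist). Then the connected domination number of the rooted product satisfies γ_c(G∘H) ∈ {n·γ_c(H), n·(γ_c(H) + 1)}. -/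
open Finset
open scoped Classical

section AuxCDS

open SimpleGraph

variable {α β : Type*}

lemma rootedProd_adj {G : SimpleGraph α} {H : SimpleGraph β} {v : β} {x y : α × β} :
    (rootedProd G H v).Adj x y ↔
      (x.2 = v ∧ y.2 = v ∧ G.Adj x.1 y.1) ∨ (x.1 = y.1 ∧ H.Adj x.2 y.2) := Iff.rfl

/-- If every vertex of the induced graph reaches a fixed vertex, the induced graph is
connected. -/
lemma connected_of_reach {G : SimpleGraph α} {S : Set α} {s0 : α} (hs0 : s0 ∈ S)
    (h : ∀ x : S, (G.induce S).Reachable x ⟨s0, hs0⟩) : (G.induce S).Connected := by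
  rw [SimpleGraph.connected_iff]
  exact ⟨fun x y => (h x).trans (h y).symm, ⟨⟨s0, hs0⟩⟩⟩

lemma connDomNum_le {G : SimpleGraph α} [Fintype α] {S : Finset α}
    (h : IsConnDomSet G ↑S) : connDomNum G ≤ S.card :=
  Nat.sInf_le ⟨S, h, rfl⟩

lemma exists_min_cds {G : SimpleGraph α} [Fintype α] (h : G.Connected) :
    ∃ S : Finset α, IsConnDomSet G ↑S ∧ S.card = connDomNum G := by
  have hne : {k | ∃ S : Finset α, IsConnDomSet G ↑S ∧ S.card = k}.Nonempty := by
    refine ⟨(Finset.univ : Finset α).card, Finset.univ, ⟨?_, ?_⟩, rfl⟩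
    · intro x hx; simp at hx
    · rw [Finset.coe_univ]
      exact (SimpleGraph.induceUnivIso G).connected_iff.mpr h
  obtain ⟨S, hS, hc⟩ := Nat.sInf_mem hne
  exact ⟨S, hS, hc⟩

/-- Adding the root to a connected dominating set keeps it connected dominating. -/
lemma cds_insert {H : SimpleGraph β} {S : Finset β} (hS : IsConnDomSet H ↑S) (v : β) :
    IsConnDomSet H ↑(insert v S) := by
  constructor
  · intro b hb
    have hb' : b ∉ S := fun h => hb (by simp [h])
    obtain ⟨u, hu, hadj⟩ := hS.1 b hb'
    exact ⟨u, by simp [hu], hadj⟩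
  · by_cases hv : v ∈ S
    · rw [Finset.insert_eq_self.mpr hv]; exact hS.2
    · obtain ⟨u, huS, huv⟩ := hS.1 v hv
      have huT : u ∈ (↑(insert v S) : Set β) := by simp [huS]
      refine connected_of_reach huT (fun x => ?_)
      by_cases hx : (x : β) ∈ S
      · let incl : (H.induce (↑S : Set β)) →g (H.induce (↑(insert v S) : Set β)) :=
          ⟨fun y => ⟨y.1, by simp [y.2]⟩, fun {a b} h => h⟩
      -- reachability in smaller induced graph mapped through the inclusion
        have hr := (hS.2.preconnected ⟨(x : β), hx⟩ ⟨u, huS⟩).map incl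
        have hxeq : (incl ⟨(x : β), hx⟩) = x := Subtype.ext rfl
        have hueq : (incl ⟨u, huS⟩) = (⟨u, huT⟩ : (↑(insert v S) : Set β)) := Subtype.ext rfl
        rwa [hxeq, hueq] at hr
      · have hxv : (x : β) = v := by
          have := x.2; simp at this; tauto
        refine SimpleGraph.Adj.reachable ?_
        show H.Adj (x : β) u
        rw [hxv]; exact huv.symm

variable {G : SimpleGraph α} {H : SimpleGraph β} {v : β}

/-- The copy map `b ↦ (a, b)` as a graph homomorphism. -/
def copyHom (G : SimpleGraph α) (H : SimpleGraph β) (v : β) (a : α) :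
    H →g rootedProd G H v :=
  ⟨fun b => (a, b), fun {x y} h => Or.inr ⟨rfl, h⟩⟩

/-- The root map `a ↦ (a, v)` as a graph homomorphism. -/
def rootHom (G : SimpleGraph α) (H : SimpleGraph β) (v : β) :
    G →g rootedProd G H v :=
  ⟨fun a => (a, v), fun {x y} h => Or.inl ⟨rfl, rfl, h⟩⟩

lemma rootedProd_connected (hG : G.Connected) (hH : H.Connected) :
    (rootedProd G H v).Connected := by
  rw [SimpleGraph.connected_iff]
  refine ⟨fun x y => ?_, ⟨(hG.nonempty.some, hH.nonempty.some)⟩⟩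
  have h1 : (rootedProd G H v).Reachable (x.1, x.2) (x.1, v) :=
    (hH.preconnected x.2 v).map (copyHom G H v x.1)
  have h2 : (rootedProd G H v).Reachable (x.1, v) (y.1, v) :=
    (hG.preconnected x.1 y.1).map (rootHom G H v)
  have h3 : (rootedProd G H v).Reachable (y.1, v) (y.1, y.2) :=
    (hH.preconnected v y.2).map (copyHom G H v y.1)
  exact (h1.trans h2).trans h3

/-- If `S` is a connected dominating set of `H` containing the root, then
`univ ×ˢ S` is a connected dominating set of the rooted product. -/
lemma cds_prod [Fintype α] (hG : G.Connected) {S : Finset β} (hv : v ∈ S)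
    (hS : IsConnDomSet H ↑S) :
    IsConnDomSet (rootedProd G H v) ↑((Finset.univ : Finset α) ×ˢ S) := by
  have hne : Nonempty α := hG.nonempty
  obtain ⟨a0⟩ := hne
  set T : Finset (α × β) := (Finset.univ : Finset α) ×ˢ S with hT
  have memT : ∀ x : α × β, x ∈ T ↔ x.2 ∈ S := by
    intro x; simp [hT, Finset.mem_product]
  constructor
  · intro x hx
    have hx2 : x.2 ∉ S := fun h => hx (by simp [Finset.mem_coe, memT x, h])
    obtain ⟨u, hu, hadj⟩ := hS.1 x.2 hx2
    refine ⟨(x.1, u), ?_, Or.inr ⟨rfl, hadj⟩⟩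
    simp [Finset.mem_coe, memT]; exact hu
  · have ha0 : ((a0, v) : α × β) ∈ (↑T : Set (α × β)) := by
      simp [Finset.mem_coe, memT]; exact hv
    refine connected_of_reach ha0 (fun x => ?_)
    have hx2 : (x : α × β).2 ∈ S := by
      have := x.2; rw [Finset.mem_coe, memT] at this; exact this
    -- hom from induced copy into induced T
    let ci : ∀ a : α, (H.induce (↑S : Set β)) →g
        ((rootedProd G H v).induce (↑T : Set (α × β))) := fun a =>
      ⟨fun y => ⟨(a, y.1), by simpa [Finset.mem_coe, memT] using y.2⟩,
        fun {p q} h => Or.inr ⟨rfl, h⟩⟩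
    let ri : G →g ((rootedProd G H v).induce (↑T : Set (α × β))) :=
      ⟨fun a => ⟨(a, v), by simpa [Finset.mem_coe, memT] using hv⟩,
        fun {p q} h => Or.inl ⟨rfl, rfl, h⟩⟩
    have h1 := (hS.2.preconnected ⟨(x : α × β).2, hx2⟩ ⟨v, hv⟩).map (ci (x : α × β).1)
    have h2 := (hG.preconnected (x : α × β).1 a0).map ri
    have e1 : ci (x : α × β).1 ⟨(x : α × β).2, hx2⟩ = x := Subtype.ext rfl
    have e2 : ci (x : α × β).1 ⟨v, hv⟩ = ri (x : α × β).1 := Subtype.ext rfl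
    have e3 : ri a0 = (⟨(a0, v), ha0⟩ : (↑T : Set (α × β))) := Subtype.ext rfl
    rw [e1, e2] at h1
    rw [e3] at h2
    exact h1.trans h2

variable [Fintype α] [Fintype β]

/-- The sliceD of `D` over `a`. -/
noncomputable def sliceD (D : Finset (α × β)) (a : α) : Finset β :=
  (D.filter fun p => p.1 = a).image Prod.snd

lemma memSliceD {D : Finset (α × β)} {a : α} {b : β} :
    b ∈ sliceD D a ↔ (a, b) ∈ D := by
  simp only [sliceD, Finset.mem_image, Finset.mem_filter]
  constructor
  · rintro ⟨p, ⟨hp, rfl⟩, rfl⟩; exact hp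
  · intro h; exact ⟨(a, b), ⟨h, rfl⟩, rfl⟩

lemma cardSliceDSum (D : Finset (α × β)) :
    D.card = ∑ a : α, (sliceD D a).card := by
  have h := Finset.card_eq_sum_card_fiberwise
    (f := Prod.fst) (s := D) (t := Finset.univ) (fun x _ => Finset.mem_univ _)
  rw [h]
  refine Finset.sum_congr rfl (fun a _ => ?_)
  rw [sliceD, Finset.card_image_of_injOn]
  intro p hp q hq hpq
  simp only [Finset.coe_filter, Set.mem_setOf_eq] at hp hq
  exact Prod.ext (hp.2.trans hq.2.symm) hpq

/-- The key walk lemma: a walk inside `D` from copy `a` to another copy passes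
through the root of copy `a`, and its prefix gives reachability to the root in
the sliceD. -/
lemma walk_aux (G : SimpleGraph α) (H : SimpleGraph β) (v : β) (D : Finset (α × β)) (a : α) :
    ∀ {p q : (↑D : Set (α × β))}
      (_ : ((rootedProd G H v).induce (↑D : Set (α × β))).Walk p q),
      (p : α × β).1 = a → (q : α × β).1 ≠ a →
      (a, v) ∈ D ∧
        ∀ (h1 : (p : α × β).2 ∈ (↑(sliceD D a) : Set β))
          (h2 : v ∈ (↑(sliceD D a) : Set β)),
          (H.induce (↑(sliceD D a) : Set β)).Reachable ⟨(p : α × β).2, h1⟩ ⟨v, h2⟩ := by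
  intro p q W
  induction W with
  | nil => intro hp hq; exact absurd hp hq
  | @cons x y z hadj w ih =>
    intro hp hq
    have hadj' : (rootedProd G H v).Adj (x : α × β) (y : α × β) := hadj
    by_cases hy : (y : α × β).1 = a
    · obtain ⟨hv, hr⟩ := ih hy hq
      refine ⟨hv, fun h1 h2 => ?_⟩
      rcases rootedProd_adj.mp hadj' with ⟨_, _, hGadj⟩ | ⟨_, hHadj⟩
      · rw [hp, hy] at hGadj; exact absurd hGadj (G.loopless.irrefl a)
      · have hy2 : (y : α × β).2 ∈ (↑(sliceD D a) : Set β) := by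
          rw [Finset.mem_coe, memSliceD]
          have := y.2
          rw [Finset.mem_coe] at this
          rwa [show ((a, (y : α × β).2) : α × β) = (y : α × β) from Prod.ext hy.symm rfl]
        have hadj2 : (H.induce (↑(sliceD D a) : Set β)).Adj ⟨(x : α × β).2, h1⟩
            ⟨(y : α × β).2, hy2⟩ := hHadj
        exact hadj2.reachable.trans (hr hy2 h2)
    · rcases rootedProd_adj.mp hadj' with ⟨hx2, _, _⟩ | ⟨h1, _⟩
      · have hvD : (a, v) ∈ D := by
          have hmem := x.2
          rw [Finset.mem_coe] at hmem
          rwa [show ((a, v) : α × β) = (x : α × β) from Prod.ext hp.symm hx2.symm]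
        refine ⟨hvD, fun h1 h2 => ?_⟩
        have : (⟨(x : α × β).2, h1⟩ : (↑(sliceD D a) : Set β)) = ⟨v, h2⟩ := Subtype.ext hx2
        rw [this]
      · rw [hp] at h1; exact absurd h1.symm hy

/-- Every sliceD of a connected dominating set of the rooted product is a connected
dominating set of `H` containing the root. -/
lemma slice_cds (hn : 2 ≤ Fintype.card α) (hm : 2 ≤ Fintype.card β)
    {D : Finset (α × β)} (hD : IsConnDomSet (rootedProd G H v) ↑D) (a : α) :
    v ∈ sliceD D a ∧ IsConnDomSet H ↑(sliceD D a) := by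
  -- every copy contains a vertex of D
  have hhit : ∀ a' : α, ∃ b, (a', b) ∈ D := by
    intro a'
    obtain ⟨b1, hb1⟩ := Fintype.exists_ne_of_one_lt_card (by omega) v
    by_cases h : ((a', b1) : α × β) ∈ D
    · exact ⟨b1, h⟩
    · obtain ⟨u, hu, hadj⟩ := hD.1 ((a', b1) : α × β) (by rwa [Finset.mem_coe])
      rcases rootedProd_adj.mp hadj with ⟨_, h2, _⟩ | ⟨h1, _⟩
      · exact absurd h2 hb1
      · refine ⟨u.2, ?_⟩
        rw [Finset.mem_coe] at hu
        rwa [show ((a', u.2) : α × β) = u from Prod.ext h1.symm rfl]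
  obtain ⟨a', ha'⟩ := Fintype.exists_ne_of_one_lt_card (by omega : 1 < Fintype.card α) a
  obtain ⟨b0, hb0⟩ := hhit a
  obtain ⟨b0', hb0'⟩ := hhit a'
  have hq : ((a', b0') : α × β) ∈ (↑D : Set (α × β)) := by rwa [Finset.mem_coe]
  -- each vertex of the sliceD reaches v
  have key : ∀ (b : β), (hb : (a, b) ∈ D) →
      (a, v) ∈ D ∧
        ∀ (h1 : b ∈ (↑(sliceD D a) : Set β)) (h2 : v ∈ (↑(sliceD D a) : Set β)),
          (H.induce (↑(sliceD D a) : Set β)).Reachable ⟨b, h1⟩ ⟨v, h2⟩ := by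
    intro b hb
    have hp : ((a, b) : α × β) ∈ (↑D : Set (α × β)) := by rwa [Finset.mem_coe]
    obtain ⟨W⟩ := hD.2.preconnected ⟨(a, b), hp⟩ ⟨(a', b0'), hq⟩
    exact walk_aux G H v D a W rfl ha'
  have hvD : (a, v) ∈ D := (key b0 hb0).1
  have hvS : v ∈ sliceD D a := memSliceD.mpr hvD
  have hvS' : v ∈ (↑(sliceD D a) : Set β) := by rwa [Finset.mem_coe]
  refine ⟨hvS, ?_, ?_⟩
  · -- domination
    intro b hb
    have hbD : ((a, b) : α × β) ∉ (↑D : Set (α × β)) := by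
      rw [Finset.mem_coe]
      intro h
      exact hb (by rw [Finset.mem_coe, memSliceD]; exact h)
    have hbv : b ≠ v := by
      intro h; rw [h] at hb; exact hb hvS'
    obtain ⟨u, hu, hadj⟩ := hD.1 ((a, b) : α × β) hbD
    rcases rootedProd_adj.mp hadj with ⟨_, h2, _⟩ | ⟨h1, hHadj⟩
    · exact absurd h2 hbv
    · refine ⟨u.2, ?_, hHadj⟩
      rw [Finset.mem_coe, memSliceD]
      rw [Finset.mem_coe] at hu
      rwa [show ((a, u.2) : α × β) = u from Prod.ext h1.symm rfl]
  · -- connectivity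
    refine connected_of_reach hvS' (fun x => ?_)
    have hx : (a, (x : β)) ∈ D := by
      have := x.2; rw [Finset.mem_coe, memSliceD] at this; exact this
    exact (key (x : β) hx).2 x.2 hvS'

end AuxCDS

/-- for connected `G` and `H`,
`γ_c(G∘H) ∈ {n·γ_c(H), n·(γ_c(H)+1)}`. -/
theorem stmt16 {α β : Type*} [Fintype α] [Fintype β]
    (G : SimpleGraph α) (H : SimpleGraph β) (v : β)
    (hG : G.Connected) (hH : H.Connected)
    (hn : 2 ≤ Fintype.card α) (hm : 2 ≤ Fintype.card β) :
    connDomNum (rootedProd G H v) ∈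
      ({Fintype.card α * connDomNum H,
        Fintype.card α * (connDomNum H + 1)} : Set ℕ) := by
  classical
  set n := Fintype.card α with hn'
  set γ := connDomNum H with hγ'
  have hα : Nonempty α := hG.nonempty
  have hP : (rootedProd G H v).Connected := rootedProd_connected hG hH
  -- minimum CDS of H
  obtain ⟨S, hS, hScard⟩ := exists_min_cds hH
  -- upper bound: n * (γ + 1)
  have hSv : IsConnDomSet H ↑(insert v S) := cds_insert hS v
  have hub : connDomNum (rootedProd G H v) ≤ n * (γ + 1) := by
    have h1 := connDomNum_le (cds_prod hG (Finset.mem_insert_self v S) hSv)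
    rw [Finset.card_product, Finset.card_univ] at h1
    refine h1.trans ?_
    have : (insert v S).card ≤ γ + 1 := by
      calc (insert v S).card ≤ S.card + 1 := Finset.card_insert_le _ _
        _ = γ + 1 := by rw [hScard]
    exact Nat.mul_le_mul_left n this
  -- minimum CDS of the product
  obtain ⟨D, hD, hDcard⟩ := exists_min_cds hP
  have hslice := fun a => slice_cds hn hm hD a
  have hlow : ∀ a : α, γ ≤ (sliceD D a).card := fun a =>
    connDomNum_le (hslice a).2
  have hsum : D.card = ∑ a : α, (sliceD D a).card := cardSliceDSum D
  by_cases hcase : ∃ a : α, (sliceD D a).card ≤ γ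
  · -- left case: γ_c(G∘H) = n γ
    left
    obtain ⟨a, ha⟩ := hcase
    have haeq : (sliceD D a).card = γ := le_antisymm ha (hlow a)
    have hub2 : connDomNum (rootedProd G H v) ≤ n * γ := by
      have h1 := connDomNum_le (cds_prod hG (hslice a).1 (hslice a).2)
      rw [Finset.card_product, Finset.card_univ, haeq] at h1
      exact h1
    have hlb : n * γ ≤ connDomNum (rootedProd G H v) := by
      rw [← hDcard, hsum]
      calc n * γ = ∑ _a : α, γ := by
            rw [Finset.sum_const, Finset.card_univ, smul_eq_mul]
        _ ≤ ∑ a : α, (sliceD D a).card := Finset.sum_le_sum (fun a _ => hlow a)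
    exact le_antisymm hub2 hlb
  · -- right case: γ_c(G∘H) = n (γ + 1)
    right
    push_neg at hcase
    have hlb : n * (γ + 1) ≤ connDomNum (rootedProd G H v) := by
      rw [← hDcard, hsum]
      calc n * (γ + 1) = ∑ _a : α, (γ + 1) := by
            rw [Finset.sum_const, Finset.card_univ, smul_eq_mul]
        _ ≤ ∑ a : α, (sliceD D a).card := Finset.sum_le_sum (fun a _ => hcase a)
    exact le_antisymm hub hlb
end
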